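/- In the Coxeter group W' of type B̃₂ with simple reflections r, s, t (rt = tr, (rs)⁴ = (st)⁴ = e), the element x₁ = stsr has length 4 and satisfies l(x₁^n) = 4n for all n ≥ 0. -/

import Mathlib

/-- The Coxeter matrix of affine type B̃₂ on generators `r = 0`, `s = 1`, `t = 2`,
with `m(r,t) = 2`, `m(r,s) = 4`, `m(s,t) = 4`. -/
def B2affMatrix : CoxeterMatrix (Fin 3) where
  M := !![1, 4, 2; 4, 1, 4; 2, 4, 1]
  off_diagonal := by
    intro i i' h
    fin_cases i <;> fin_cases i' <;> simp_all

/-- The affine Weyl group of type B̃₂. -/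
abbrev B2affGroup := B2affMatrix.Group

/-- The canonical Coxeter system on the affine Weyl group of type B̃₂. -/
def B2affCS : CoxeterSystem B2affMatrix B2affGroup := B2affMatrix.toCoxeterSystem

namespace B2aff

/-- The simple reflection `r`. -/
def r : B2affGroup := B2affCS.simple 0
/-- The simple reflection `s`. -/
def s : B2affGroup := B2affCS.simple 1
/-- The simple reflection `t`. -/
def t : B2affGroup := B2affCS.simple 2

end B2aff

namespace B2affProof

def Rp : Equiv.Perm (ℚ × ℚ) :=
  Function.Involutive.toPerm (fun p => (2 - p.1, p.2)) (by intro p; simp)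

def Sp : Equiv.Perm (ℚ × ℚ) := Equiv.prodComm ℚ ℚ

def Tp : Equiv.Perm (ℚ × ℚ) :=
  Function.Involutive.toPerm (fun p => (p.1, - p.2)) (by intro p; simp)

@[simp] lemma Rp_apply (p : ℚ × ℚ) : Rp p = (2 - p.1, p.2) := rfl
@[simp] lemma Sp_apply (p : ℚ × ℚ) : Sp p = (p.2, p.1) := rfl
@[simp] lemma Tp_apply (p : ℚ × ℚ) : Tp p = (p.1, - p.2) := rfl

def f : Fin 3 → Equiv.Perm (ℚ × ℚ) := ![Rp, Sp, Tp]

lemma hlift : CoxeterMatrix.IsLiftable B2affMatrix f := by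
  intro i j
  fin_cases i <;> fin_cases j
  · show (Rp * Rp) ^ 1 = 1
    ext ⟨x, y⟩ <;> simp [Equiv.Perm.mul_apply]
  · show (Rp * Sp) ^ 4 = 1
    ext ⟨x, y⟩ <;> simp [pow_succ, Equiv.Perm.mul_apply]
  · show (Rp * Tp) ^ 2 = 1
    ext ⟨x, y⟩ <;> simp [pow_succ, Equiv.Perm.mul_apply]
  · show (Sp * Rp) ^ 4 = 1
    ext ⟨x, y⟩ <;> simp [pow_succ, Equiv.Perm.mul_apply]
  · show (Sp * Sp) ^ 1 = 1
    ext ⟨x, y⟩ <;> simp [Equiv.Perm.mul_apply]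
  · show (Sp * Tp) ^ 4 = 1
    ext ⟨x, y⟩ <;> simp [pow_succ, Equiv.Perm.mul_apply]
  · show (Tp * Rp) ^ 2 = 1
    ext ⟨x, y⟩ <;> simp [pow_succ, Equiv.Perm.mul_apply]
  · show (Tp * Sp) ^ 4 = 1
    ext ⟨x, y⟩ <;> simp [pow_succ, Equiv.Perm.mul_apply]
  · show (Tp * Tp) ^ 1 = 1
    ext ⟨x, y⟩ <;> simp [Equiv.Perm.mul_apply]

end B2affProof
namespace B2affProof

/-- A rational number avoiding all integers. -/
def NI (a : ℚ) : Prop := ∀ k : ℤ, a ≠ k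

lemma NI.floor_lt {a : ℚ} (h : NI a) : (⌊a⌋ : ℚ) < a :=
  lt_of_le_of_ne (Int.floor_le a) (fun e => h ⌊a⌋ e.symm)

lemma NI.floor_neg {a : ℚ} (h : NI a) : ⌊-a⌋ = -⌊a⌋ - 1 := by
  rw [Int.floor_eq_iff]
  constructor
  · push_cast
    have := Int.lt_floor_add_one a
    linarith
  · push_cast
    have := h.floor_lt
    linarith

lemma NI.floor_int_sub {a : ℚ} (h : NI a) (c : ℤ) : ⌊(c : ℚ) - a⌋ = c - ⌊a⌋ - 1 := by
  rw [sub_eq_add_neg, add_comm, Int.floor_add_intCast, h.floor_neg]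
  ring

lemma NI.sub_int {a : ℚ} (h : NI a) (c : ℤ) : NI ((c : ℚ) - a) := by
  intro k hk
  exact h (c - k) (by push_cast; linarith)

lemma NI.neg {a : ℚ} (h : NI a) : NI (-a) := by
  intro k hk
  exact h (-k) (by push_cast; linarith)

/-- `a` avoids all even integers. -/
def NE (a : ℚ) : Prop := ∀ k : ℤ, a ≠ 2 * k

lemma NE.half {a : ℚ} (h : NE a) : NI (a / 2) := by
  intro k hk
  exact h k (by rw [div_eq_iff (by norm_num : (2:ℚ) ≠ 0)] at hk; linarith)

lemma NE.int_sub {a : ℚ} (h : NE a) (c : ℤ) : NE ((2 * c : ℚ) - a) := by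
  intro k hk
  exact h (c - k) (by push_cast; linarith)

lemma NE.neg {a : ℚ} (h : NE a) : NE (-a) := by
  intro k hk
  exact h (-k) (by push_cast; linarith)

def Good (p : ℚ × ℚ) : Prop := NI p.1 ∧ NI p.2 ∧ NE (p.1 + p.2) ∧ NE (p.1 - p.2)

def c1 (p : ℚ × ℚ) : ℤ := ⌊p.1⌋
def c2 (p : ℚ × ℚ) : ℤ := ⌊p.2⌋
def c3 (p : ℚ × ℚ) : ℤ := ⌊(p.1 + p.2) / 2⌋
def c4 (p : ℚ × ℚ) : ℤ := ⌊(p.1 - p.2) / 2⌋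

/-- Number of walls separating `p` and `q`. -/
def D (p q : ℚ × ℚ) : ℕ :=
  (c1 p - c1 q).natAbs + (c2 p - c2 q).natAbs + (c3 p - c3 q).natAbs + (c4 p - c4 q).natAbs

lemma natAbs_tri (a b c : ℤ) : (a - c).natAbs ≤ (a - b).natAbs + (b - c).natAbs := by omega

lemma D_triangle (p q r : ℚ × ℚ) : D p r ≤ D p q + D q r := by
  unfold D
  have t1 := natAbs_tri (c1 p) (c1 q) (c1 r)
  have t2 := natAbs_tri (c2 p) (c2 q) (c2 r)
  have t3 := natAbs_tri (c3 p) (c3 q) (c3 r)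
  have t4 := natAbs_tri (c4 p) (c4 q) (c4 r)
  omega

lemma Good.R {p : ℚ × ℚ} (h : Good p) : Good (Rp p) := by
  obtain ⟨h1, h2, h3, h4⟩ := h
  refine ⟨by simpa using h1.sub_int 2, h2, ?_, ?_⟩
  · have := h4.int_sub 1
    intro k hk
    exact this k (by push_cast at hk ⊢; simp at hk ⊢; linarith)
  · have := h3.int_sub 1
    intro k hk
    exact this k (by push_cast at hk ⊢; simp at hk ⊢; linarith)

lemma Good.S {p : ℚ × ℚ} (h : Good p) : Good (Sp p) := by
  obtain ⟨h1, h2, h3, h4⟩ := h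
  refine ⟨h2, h1, ?_, ?_⟩
  · intro k hk; exact h3 k (by simp at hk ⊢; linarith)
  · intro k hk; exact h4 (-k) (by simp at hk ⊢; linarith)

lemma Good.T {p : ℚ × ℚ} (h : Good p) : Good (Tp p) := by
  obtain ⟨h1, h2, h3, h4⟩ := h
  refine ⟨h1, h2.neg, ?_, ?_⟩
  · intro k hk; exact h4 k (by simp at hk ⊢; linarith)
  · intro k hk; exact h3 k (by simp at hk ⊢; linarith)

lemma cR {p : ℚ × ℚ} (h : Good p) :
    c1 (Rp p) = 1 - c1 p ∧ c2 (Rp p) = c2 p ∧ c3 (Rp p) = -(c4 p) ∧ c4 (Rp p) = -(c3 p) := by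
  obtain ⟨h1, h2, h3, h4⟩ := h
  refine ⟨?_, rfl, ?_, ?_⟩
  · show ⌊2 - p.1⌋ = 1 - ⌊p.1⌋
    have := h1.floor_int_sub 2
    push_cast at this; linarith
  · show ⌊(2 - p.1 + p.2) / 2⌋ = -⌊(p.1 - p.2)/2⌋
    have h' := h4.half
    have : ⌊(1:ℚ) - (p.1 - p.2)/2⌋ = 1 - ⌊(p.1 - p.2)/2⌋ - 1 := by
      have := h'.floor_int_sub 1; push_cast at this; linarith
    rw [show (2 - p.1 + p.2) / 2 = 1 - (p.1 - p.2)/2 by ring]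
    linarith
  · show ⌊(2 - p.1 - p.2) / 2⌋ = -⌊(p.1 + p.2)/2⌋
    have h' := h3.half
    have : ⌊(1:ℚ) - (p.1 + p.2)/2⌋ = 1 - ⌊(p.1 + p.2)/2⌋ - 1 := by
      have := h'.floor_int_sub 1; push_cast at this; linarith
    rw [show (2 - p.1 - p.2) / 2 = 1 - (p.1 + p.2)/2 by ring]
    linarith

lemma cS {p : ℚ × ℚ} (h : Good p) :
    c1 (Sp p) = c2 p ∧ c2 (Sp p) = c1 p ∧ c3 (Sp p) = c3 p ∧ c4 (Sp p) = -(c4 p) - 1 := by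
  obtain ⟨h1, h2, h3, h4⟩ := h
  refine ⟨rfl, rfl, by show ⌊(p.2 + p.1)/2⌋ = ⌊(p.1 + p.2)/2⌋; rw [add_comm], ?_⟩
  show ⌊(p.2 - p.1)/2⌋ = -⌊(p.1 - p.2)/2⌋ - 1
  have := h4.half.floor_neg
  rw [show (p.2 - p.1)/2 = -((p.1 - p.2)/2) by ring]
  linarith

lemma cT {p : ℚ × ℚ} (h : Good p) :
    c1 (Tp p) = c1 p ∧ c2 (Tp p) = -(c2 p) - 1 ∧ c3 (Tp p) = c4 p ∧ c4 (Tp p) = c3 p := by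
  obtain ⟨h1, h2, h3, h4⟩ := h
  refine ⟨rfl, by unfold c2; exact h2.floor_neg, ?_, ?_⟩
  · show ⌊(p.1 + -p.2)/2⌋ = ⌊(p.1 - p.2)/2⌋
    rw [show p.1 + -p.2 = p.1 - p.2 by ring]
  · show ⌊(p.1 - -p.2)/2⌋ = ⌊(p.1 + p.2)/2⌋
    rw [show p.1 - -p.2 = p.1 + p.2 by ring]

lemma D_R {p q : ℚ × ℚ} (hp : Good p) (hq : Good q) : D (Rp p) (Rp q) = D p q := by
  obtain ⟨a1, a2, a3, a4⟩ := cR hp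
  obtain ⟨b1, b2, b3, b4⟩ := cR hq
  unfold D
  rw [a1, a2, a3, a4, b1, b2, b3, b4]
  generalize c1 p = x1; generalize c2 p = x2; generalize c3 p = x3; generalize c4 p = x4
  generalize c1 q = y1; generalize c2 q = y2; generalize c3 q = y3; generalize c4 q = y4
  omega

lemma D_S {p q : ℚ × ℚ} (hp : Good p) (hq : Good q) : D (Sp p) (Sp q) = D p q := by
  obtain ⟨a1, a2, a3, a4⟩ := cS hp
  obtain ⟨b1, b2, b3, b4⟩ := cS hq
  unfold D
  rw [a1, a2, a3, a4, b1, b2, b3, b4]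
  generalize c1 p = x1; generalize c2 p = x2; generalize c3 p = x3; generalize c4 p = x4
  generalize c1 q = y1; generalize c2 q = y2; generalize c3 q = y3; generalize c4 q = y4
  omega

lemma D_T {p q : ℚ × ℚ} (hp : Good p) (hq : Good q) : D (Tp p) (Tp q) = D p q := by
  obtain ⟨a1, a2, a3, a4⟩ := cT hp
  obtain ⟨b1, b2, b3, b4⟩ := cT hq
  unfold D
  rw [a1, a2, a3, a4, b1, b2, b3, b4]
  generalize c1 p = x1; generalize c2 p = x2; generalize c3 p = x3; generalize c4 p = x4
  generalize c1 q = y1; generalize c2 q = y2; generalize c3 q = y3; generalize c4 q = y4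
  omega

end B2affProof
namespace B2affProof

noncomputable def φ : B2affGroup →* Equiv.Perm (ℚ × ℚ) := B2affCS.lift ⟨f, hlift⟩

lemma φ_simple (i : Fin 3) : φ (B2affCS.simple i) = f i :=
  B2affCS.lift_apply_simple hlift i

/-- base point in the interior of the fundamental alcove -/
def p₀ : ℚ × ℚ := (3/4, 1/4)

lemma NI_of {a : ℚ} (n : ℤ) (h1 : (n:ℚ) < a) (h2 : a < n + 1) : NI a := by
  intro k hk
  subst hk
  have p : n < k := by exact_mod_cast h1
  have q : k < n + 1 := by exact_mod_cast h2
  omega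

lemma NE_of {a : ℚ} (n : ℤ) (h1 : 2*(n:ℚ) < a) (h2 : a < 2*n + 2) : NE a := by
  intro k hk
  subst hk
  have p : 2*n < 2*k := by exact_mod_cast h1
  have q : 2*k < 2*n + 2 := by exact_mod_cast h2
  omega

lemma good_p₀ : Good p₀ := by
  refine ⟨NI_of 0 (by norm_num [p₀]) (by norm_num [p₀]), NI_of 0 (by norm_num [p₀]) (by norm_num [p₀]),
    NE_of 0 (by norm_num [p₀]) (by norm_num [p₀]), NE_of 0 (by norm_num [p₀]) (by norm_num [p₀])⟩

lemma floor_eq {a : ℚ} (n : ℤ) (h1 : (n:ℚ) ≤ a) (h2 : a < n + 1) : ⌊a⌋ = n := by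
  rw [Int.floor_eq_iff]; exact ⟨h1, h2⟩

lemma c_p₀ : c1 p₀ = 0 ∧ c2 p₀ = 0 ∧ c3 p₀ = 0 ∧ c4 p₀ = 0 :=
  ⟨floor_eq 0 (by norm_num [p₀]) (by norm_num [p₀]),
   floor_eq 0 (by norm_num [p₀]) (by norm_num [p₀]),
   floor_eq 0 (by norm_num [p₀]) (by norm_num [p₀]),
   floor_eq 0 (by norm_num [p₀]) (by norm_num [p₀])⟩

lemma D_p₀_R : D p₀ (Rp p₀) ≤ 1 := by
  obtain ⟨e1, e2, e3, e4⟩ := c_p₀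
  unfold D
  rw [e1, e2, e3, e4,
    show c1 (Rp p₀) = 1 from floor_eq 1 (by norm_num [p₀]) (by norm_num [p₀]),
    show c2 (Rp p₀) = 0 from floor_eq 0 (by norm_num [p₀]) (by norm_num [p₀]),
    show c3 (Rp p₀) = 0 from floor_eq 0 (by norm_num [p₀]) (by norm_num [p₀]),
    show c4 (Rp p₀) = 0 from floor_eq 0 (by norm_num [p₀]) (by norm_num [p₀])]
  norm_num

lemma D_p₀_S : D p₀ (Sp p₀) ≤ 1 := by
  obtain ⟨e1, e2, e3, e4⟩ := c_p₀
  unfold D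
  rw [e1, e2, e3, e4,
    show c1 (Sp p₀) = 0 from floor_eq 0 (by norm_num [p₀]) (by norm_num [p₀]),
    show c2 (Sp p₀) = 0 from floor_eq 0 (by norm_num [p₀]) (by norm_num [p₀]),
    show c3 (Sp p₀) = 0 from floor_eq 0 (by norm_num [p₀]) (by norm_num [p₀]),
    show c4 (Sp p₀) = -1 from floor_eq (-1) (by norm_num [p₀]) (by norm_num [p₀])]
  norm_num

lemma D_p₀_T : D p₀ (Tp p₀) ≤ 1 := by
  obtain ⟨e1, e2, e3, e4⟩ := c_p₀
  unfold D
  rw [e1, e2, e3, e4,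
    show c1 (Tp p₀) = 0 from floor_eq 0 (by norm_num [p₀]) (by norm_num [p₀]),
    show c2 (Tp p₀) = -1 from floor_eq (-1) (by norm_num [p₀]) (by norm_num [p₀]),
    show c3 (Tp p₀) = 0 from floor_eq 0 (by norm_num [p₀]) (by norm_num [p₀]),
    show c4 (Tp p₀) = 0 from floor_eq 0 (by norm_num [p₀]) (by norm_num [p₀])]
  norm_num

lemma step (i : Fin 3) (q : ℚ × ℚ) (hq : Good q) :
    Good (f i q) ∧ D p₀ (f i q) ≤ D p₀ q + 1 := by
  fin_cases i
  · show Good (Rp q) ∧ D p₀ (Rp q) ≤ D p₀ q + 1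
    refine ⟨hq.R, ?_⟩
    calc D p₀ (Rp q) ≤ D p₀ (Rp p₀) + D (Rp p₀) (Rp q) := D_triangle _ _ _
      _ ≤ 1 + D p₀ q := by rw [D_R good_p₀ hq]; exact Nat.add_le_add_right D_p₀_R _
      _ = D p₀ q + 1 := by omega
  · show Good (Sp q) ∧ D p₀ (Sp q) ≤ D p₀ q + 1
    refine ⟨hq.S, ?_⟩
    calc D p₀ (Sp q) ≤ D p₀ (Sp p₀) + D (Sp p₀) (Sp q) := D_triangle _ _ _
      _ ≤ 1 + D p₀ q := by rw [D_S good_p₀ hq]; exact Nat.add_le_add_right D_p₀_S _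
      _ = D p₀ q + 1 := by omega
  · show Good (Tp q) ∧ D p₀ (Tp q) ≤ D p₀ q + 1
    refine ⟨hq.T, ?_⟩
    calc D p₀ (Tp q) ≤ D p₀ (Tp p₀) + D (Tp p₀) (Tp q) := D_triangle _ _ _
      _ ≤ 1 + D p₀ q := by rw [D_T good_p₀ hq]; exact Nat.add_le_add_right D_p₀_T _
      _ = D p₀ q + 1 := by omega

lemma D_self : D p₀ p₀ = 0 := by unfold D; simp

lemma key (ω : List (Fin 3)) :
    Good (φ (B2affCS.wordProd ω) p₀) ∧ D p₀ (φ (B2affCS.wordProd ω) p₀) ≤ ω.length := by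
  induction ω with
  | nil =>
    rw [CoxeterSystem.wordProd_nil, map_one]
    exact ⟨good_p₀, by simp [D_self]⟩
  | cons i ω ih =>
    rw [CoxeterSystem.wordProd_cons, map_mul, φ_simple, Equiv.Perm.mul_apply]
    obtain ⟨hg, hd⟩ := ih
    obtain ⟨hg', hd'⟩ := step i _ hg
    exact ⟨hg', by simpa using le_trans hd' (by omega)⟩

lemma length_ge (w : B2affGroup) : D p₀ (φ w p₀) ≤ B2affCS.length w := by
  obtain ⟨ω, h1, h2⟩ := B2affCS.exists_reduced_word w
  rw [h2]
  rw [show B2affCS.length (B2affCS.wordProd ω) = ω.length from h1]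
  exact (key ω).2

open B2aff

lemma φx_apply (p : ℚ × ℚ) : φ (s * t * s * r) p = (p.1 - 2, p.2) := by
  simp only [map_mul, r, s, t, φ_simple]
  show (f 1) ((f 2) ((f 1) ((f 0) p))) = _
  show Sp (Tp (Sp (Rp p))) = _
  simp only [Rp_apply, Sp_apply, Tp_apply, Prod.mk.injEq]
  exact ⟨by ring, trivial⟩

lemma φxn_apply (n : ℕ) : φ ((s * t * s * r) ^ n) p₀ = ((3/4 - 2*n : ℚ), (1/4 : ℚ)) := by
  induction n with
  | zero => simp [p₀]
  | succ n ih =>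
    rw [pow_succ', map_mul, Equiv.Perm.mul_apply, ih, φx_apply]
    push_cast
    simp only [Prod.mk.injEq]
    exact ⟨by ring, trivial⟩

lemma D_xn (n : ℕ) : D p₀ (φ ((s * t * s * r) ^ n) p₀) = 4 * n := by
  obtain ⟨e1, e2, e3, e4⟩ := c_p₀
  rw [φxn_apply]
  unfold D
  rw [e1, e2, e3, e4,
    show c1 ((3/4 - 2*(n:ℚ), 1/4)) = -2*n from
      floor_eq (-2*n) (by push_cast; linarith) (by push_cast; linarith),
    show c2 ((3/4 - 2*(n:ℚ), 1/4)) = 0 from floor_eq 0 (by norm_num) (by norm_num),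
    show c3 ((3/4 - 2*(n:ℚ), 1/4)) = -n from
      floor_eq (-n) (by push_cast; linarith) (by push_cast; linarith),
    show c4 ((3/4 - 2*(n:ℚ), 1/4)) = -n from
      floor_eq (-n) (by push_cast; linarith) (by push_cast; linarith)]
  omega

end B2affProof
namespace B2affProof

open B2aff

lemma hx_word : s * t * s * r = B2affCS.wordProd [1, 2, 1, 0] := by
  simp [CoxeterSystem.wordProd_cons, CoxeterSystem.wordProd_nil, r, s, t, mul_assoc]

lemma length_le (n : ℕ) : B2affCS.length ((s * t * s * r) ^ n) ≤ 4 * n := by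
  induction n with
  | zero => simp
  | succ n ih =>
    rw [pow_succ]
    calc B2affCS.length ((s * t * s * r) ^ n * (s * t * s * r))
        ≤ B2affCS.length ((s * t * s * r) ^ n) + B2affCS.length (s * t * s * r) :=
          B2affCS.length_mul_le _ _
      _ ≤ 4 * n + 4 := by
          have : B2affCS.length (s * t * s * r) ≤ 4 := by
            rw [hx_word]; exact B2affCS.length_wordProd_le _
          omega
      _ = 4 * (n + 1) := by ring

lemma length_eq (n : ℕ) : B2affCS.length ((s * t * s * r) ^ n) = 4 * n := by
  refine le_antisymm (length_le n) ?_
  have := length_ge ((s * t * s * r) ^ n)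
  rw [D_xn n] at this
  exact this

end B2affProof


open B2aff in
/-- In the affine Weyl group of type B̃₂, the element `x₁ = stsr` has length 4,
and `l(x₁^n) = 4n` for all `n ≥ 0`. -/
theorem length_stsr_pow :
    B2affCS.length (s * t * s * r) = 4 ∧
    ∀ n : ℕ, B2affCS.length ((s * t * s * r) ^ n) = 4 * n := by
  refine ⟨?_, B2affProof.length_eq⟩
  have := B2affProof.length_eq 1
  rwa [pow_one, mul_one] at this
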